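/- Each of the four elements I − BK⁻¹, I − KB⁻¹, I − K⁻¹B, I − B⁻¹K of End(V) sends U_i into U_0 + U_1 + ⋯ + U_{i−1} for 0 ≤ i ≤ d (interpreting the empty sum as 0 when i = 0), and each of these four elements is nilpotent. -/
import Mathlib


noncomputable section

open Module Submodule Polynomial

/-- The q-Racah eigenvalue `θ_i = a q^{d-2i} + a⁻¹ q^{2i-d}`. -/
def qRacahTheta {𝕂 : Type*} [Field 𝕂] (d : ℕ) (q a : 𝕂) (i : ℕ) : 𝕂 :=
  a * q ^ ((d : ℤ) - 2 * (i : ℤ)) + a⁻¹ * q ^ (2 * (i : ℤ) - (d : ℤ))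

/-- The polynomial `τ_{ij} = (x-θ_i)(x-θ_{i+1})⋯(x-θ_{j-1})`. -/
def qRacahTau {𝕂 : Type*} [Field 𝕂] (d : ℕ) (q a : 𝕂) (i j : ℕ) : Polynomial 𝕂 :=
  ∏ k ∈ Finset.Ico i j, (Polynomial.X - Polynomial.C (qRacahTheta d q a k))

/-- A tridiagonal pair of q-Racah type, with diameter `d ≥ 1`, on a finite-dimensional
vector space `V` over an algebraically closed field `𝕂`.  The eigenspaces of `A`
(resp. `A*`) are `Veig i` (resp. `Vstar i`) for `0 ≤ i ≤ d`, in a standard ordering,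
with eigenvalues `θ_i = a q^{d-2i} + a⁻¹ q^{2i-d}` (resp. `θ*_i = b q^{d-2i} + b⁻¹ q^{2i-d}`). -/
structure QRacahTDPair (𝕂 V : Type*) [Field 𝕂] [IsAlgClosed 𝕂]
    [AddCommGroup V] [Module 𝕂 V] [FiniteDimensional 𝕂 V] [Nontrivial V] where
  A : Module.End 𝕂 V
  Astar : Module.End 𝕂 V
  d : ℕ
  hd : 1 ≤ d
  q : 𝕂
  a : 𝕂
  b : 𝕂
  hq : q ≠ 0
  ha : a ≠ 0
  hb : b ≠ 0
  hq4 : q ^ 4 ≠ 1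
  Veig : ℕ → Submodule 𝕂 V
  Vstar : ℕ → Submodule 𝕂 V
  hVeig : ∀ i ≤ d, Veig i = Module.End.eigenspace A (qRacahTheta d q a i)
  hVeig_ne : ∀ i ≤ d, Veig i ≠ ⊥
  hVeig_zero : ∀ i, d < i → Veig i = ⊥
  hVeig_all : ∀ μ : 𝕂, Module.End.eigenspace A μ ≠ ⊥ → ∃ i ≤ d, μ = qRacahTheta d q a i
  hVstar : ∀ i ≤ d, Vstar i = Module.End.eigenspace Astar (qRacahTheta d q b i)
  hVstar_ne : ∀ i ≤ d, Vstar i ≠ ⊥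
  hVstar_zero : ∀ i, d < i → Vstar i = ⊥
  hVstar_all : ∀ μ : 𝕂, Module.End.eigenspace Astar μ ≠ ⊥ → ∃ i ≤ d, μ = qRacahTheta d q b i
  hdiag : (⨆ i ∈ Finset.range (d + 1), Veig i) = ⊤
  hdiagStar : (⨆ i ∈ Finset.range (d + 1), Vstar i) = ⊤
  hTri : ∀ i ≤ d, (Veig i).map Astar ≤ Veig (i - 1) ⊔ Veig i ⊔ Veig (i + 1)
  hTriStar : ∀ i ≤ d, (Vstar i).map A ≤ Vstar (i - 1) ⊔ Vstar i ⊔ Vstar (i + 1)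
  hIrred : ∀ W : Submodule 𝕂 V, W.map A ≤ W → W.map Astar ≤ W → W = ⊥ ∨ W = ⊤

namespace QRacahTDPair

variable {𝕂 V : Type*} [Field 𝕂] [IsAlgClosed 𝕂]
  [AddCommGroup V] [Module 𝕂 V] [FiniteDimensional 𝕂 V] [Nontrivial V]

/-- `U_i = (V*_0 + ⋯ + V*_i) ∩ (V_i + ⋯ + V_d)`, the first split decomposition. -/
def U (S : QRacahTDPair 𝕂 V) (i : ℕ) : Submodule 𝕂 V :=
  (⨆ j ∈ Finset.range (i + 1), S.Vstar j) ⊓ (⨆ j ∈ Finset.Icc i S.d, S.Veig j)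

/-- `U_i^⇓ = (V*_0 + ⋯ + V*_i) ∩ (V_0 + ⋯ + V_{d-i})`, the second split decomposition. -/
def Udown (S : QRacahTDPair 𝕂 V) (i : ℕ) : Submodule 𝕂 V :=
  (⨆ j ∈ Finset.range (i + 1), S.Vstar j) ⊓ (⨆ j ∈ Finset.range (S.d - i + 1), S.Veig j)

/-- `K_i = U_i ∩ U_i^⇓`. -/
def Ksub (S : QRacahTDPair 𝕂 V) (i : ℕ) : Submodule 𝕂 V := S.U i ⊓ S.Udown i

/-- `U_{i-1}`, with the convention `U_{-1} = 0`. -/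
def Uprev (S : QRacahTDPair 𝕂 V) : ℕ → Submodule 𝕂 V
  | 0 => ⊥
  | i + 1 => S.U i

/-- The operator `τ_{ij}(A) = (A-θ_i)(A-θ_{i+1})⋯(A-θ_{j-1})`. -/
def tauA (S : QRacahTDPair 𝕂 V) (i j : ℕ) : Module.End 𝕂 V :=
  Polynomial.aeval S.A (qRacahTau S.d S.q S.a i j)

end QRacahTDPair

/-- A tridiagonal pair of q-Racah type together with the operators `K`, `B` (with their
inverses `K⁻¹ = Kinv`, `B⁻¹ = Binv`) and the double lowering operator `ψ`, which is the
unique endomorphism with `ψR - Rψ = (q - q⁻¹)(K - K⁻¹)` (where `R = A - aK - a⁻¹K⁻¹`)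
and `ψ K_i = 0` for `0 ≤ i ≤ d/2`. -/
structure QRacahOps (𝕂 V : Type*) [Field 𝕂] [IsAlgClosed 𝕂]
    [AddCommGroup V] [Module 𝕂 V] [FiniteDimensional 𝕂 V] [Nontrivial V]
    extends QRacahTDPair 𝕂 V where
  K : Module.End 𝕂 V
  Kinv : Module.End 𝕂 V
  B : Module.End 𝕂 V
  Binv : Module.End 𝕂 V
  hKKinv : K * Kinv = 1
  hKinvK : Kinv * K = 1
  hBBinv : B * Binv = 1
  hBinvB : Binv * B = 1
  hK : ∀ i ≤ d, ∀ v ∈ toQRacahTDPair.U i, K v = (q ^ ((d : ℤ) - 2 * (i : ℤ))) • v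
  hB : ∀ i ≤ d, ∀ v ∈ toQRacahTDPair.Udown i, B v = (q ^ ((d : ℤ) - 2 * (i : ℤ))) • v
  ψ : Module.End 𝕂 V
  hψR : ψ * (A - a • K - a⁻¹ • Kinv) - (A - a • K - a⁻¹ • Kinv) * ψ
      = (q - q⁻¹) • (K - Kinv)
  hψKer : ∀ i, 2 * i ≤ d → toQRacahTDPair.Ksub i ≤ LinearMap.ker ψ

namespace QRacahOps

variable {𝕂 V : Type*} [Field 𝕂] [IsAlgClosed 𝕂]
  [AddCommGroup V] [Module 𝕂 V] [FiniteDimensional 𝕂 V] [Nontrivial V]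

/-- The raising map `R = A - aK - a⁻¹K⁻¹`. -/
def R (S : QRacahOps 𝕂 V) : Module.End 𝕂 V := S.A - S.a • S.K - S.a⁻¹ • S.Kinv

/-- The raising map `R^⇓ = A - a⁻¹B - aB⁻¹`. -/
def Rdown (S : QRacahOps 𝕂 V) : Module.End 𝕂 V := S.A - S.a⁻¹ • S.B - S.a • S.Binv

/-- `MK_i`: the submodule of `V` generated by `K_i` under the subalgebra `M` of
`End(V)` generated by `A`. -/
def MK (S : QRacahOps 𝕂 V) (i : ℕ) : Submodule 𝕂 V :=
  Submodule.span 𝕂 {w : V | ∃ m ∈ Algebra.adjoin 𝕂 ({S.A} : Set (Module.End 𝕂 V)),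
    ∃ v ∈ S.Ksub i, w = m v}

end QRacahOps

section Statements

variable {𝕂 V : Type*} [Field 𝕂] [IsAlgClosed 𝕂]
  [AddCommGroup V] [Module 𝕂 V] [FiniteDimensional 𝕂 V] [Nontrivial V]

namespace QRacahAux

open Submodule

variable {𝕂 V : Type*} [Field 𝕂] [IsAlgClosed 𝕂]
  [AddCommGroup V] [Module 𝕂 V] [FiniteDimensional 𝕂 V] [Nontrivial V]

/-- `flg i = V*_0 + ⋯ + V*_i`. -/
def flg (S : QRacahOps 𝕂 V) (i : ℕ) : Submodule 𝕂 V :=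
  ⨆ j ∈ Finset.range (i + 1), S.Vstar j

/-- `flgP i = V*_0 + ⋯ + V*_{i-1}` (so `flgP 0 = ⊥`). -/
def flgP (S : QRacahOps 𝕂 V) (i : ℕ) : Submodule 𝕂 V :=
  ⨆ j ∈ Finset.range i, S.Vstar j

/-- `tl i = V_i + ⋯ + V_d`. -/
def tl (S : QRacahOps 𝕂 V) (i : ℕ) : Submodule 𝕂 V :=
  ⨆ j ∈ Finset.Icc i S.d, S.Veig j

/-- `hdl i = V_0 + ⋯ + V_i`. -/
def hdl (S : QRacahOps 𝕂 V) (i : ℕ) : Submodule 𝕂 V :=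
  ⨆ j ∈ Finset.range (i + 1), S.Veig j

/-- abbreviation for the eigenvalues of `A`. -/
def tha (S : QRacahOps 𝕂 V) (i : ℕ) : 𝕂 := qRacahTheta S.d S.q S.a i

/-- abbreviation for the eigenvalues of `A*`. -/
def thb (S : QRacahOps 𝕂 V) (i : ℕ) : 𝕂 := qRacahTheta S.d S.q S.b i

/-- the eigenvalue of `K` on `U_i`. -/
def csc (S : QRacahOps 𝕂 V) (i : ℕ) : 𝕂 := S.q ^ ((S.d : ℤ) - 2 * (i : ℤ))

variable (S : QRacahOps 𝕂 V)

lemma U_eq (i : ℕ) : S.U i = flg S i ⊓ tl S i := rfl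

lemma Udown_eq (i : ℕ) : S.Udown i = flg S i ⊓ hdl S (S.d - i) := rfl

lemma flgP_succ (i : ℕ) : flgP S (i + 1) = flg S i := rfl

lemma flgP_zero : flgP S 0 = ⊥ := by simp [flgP]

lemma Vstar_le_flg {j i : ℕ} (h : j ≤ i) : S.Vstar j ≤ flg S i :=
  le_iSup₂ (f := fun j (_ : j ∈ Finset.range (i + 1)) => S.Vstar j) j
    (Finset.mem_range.2 (Nat.lt_succ_of_le h))

lemma Veig_le_tl {i j : ℕ} (h1 : i ≤ j) (h2 : j ≤ S.d) : S.Veig j ≤ tl S i :=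
  le_iSup₂ (f := fun j (_ : j ∈ Finset.Icc i S.d) => S.Veig j) j
    (Finset.mem_Icc.2 ⟨h1, h2⟩)

lemma Veig_le_hdl {j i : ℕ} (h : j ≤ i) : S.Veig j ≤ hdl S i :=
  le_iSup₂ (f := fun j (_ : j ∈ Finset.range (i + 1)) => S.Veig j) j
    (Finset.mem_range.2 (Nat.lt_succ_of_le h))

lemma biSup_le_of_subset {ι : Type*} (p : ι → Submodule 𝕂 V) {s t : Finset ι}
    (h : s ⊆ t) : (⨆ j ∈ s, p j) ≤ ⨆ j ∈ t, p j :=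
  iSup₂_le fun j hj => le_iSup₂ (f := fun j (_ : j ∈ t) => p j) j (h hj)

lemma flg_mono {i i' : ℕ} (h : i ≤ i') : flg S i ≤ flg S i' :=
  biSup_le_of_subset _ (Finset.range_subset_range.2 (by omega))

lemma flgP_mono {i i' : ℕ} (h : i ≤ i') : flgP S i ≤ flgP S i' :=
  biSup_le_of_subset _ (Finset.range_subset_range.2 h)

lemma flgP_le_flg (i : ℕ) : flgP S i ≤ flg S i :=
  biSup_le_of_subset _ (Finset.range_subset_range.2 (by omega))

lemma tl_anti {i i' : ℕ} (h : i ≤ i') : tl S i' ≤ tl S i :=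
  biSup_le_of_subset _ (Finset.Icc_subset_Icc_left h)

lemma hdl_mono {i i' : ℕ} (h : i ≤ i') : hdl S i ≤ hdl S i' :=
  biSup_le_of_subset _ (Finset.range_subset_range.2 (by omega))

lemma flg_top : flg S S.d = ⊤ := S.hdiagStar

lemma flg_zero : flg S 0 = S.Vstar 0 := by simp [flg]

lemma range_eq_Icc (n : ℕ) : Finset.range (n + 1) = Finset.Icc 0 n := by
  ext x; simp [Finset.mem_range, Finset.mem_Icc, Nat.lt_succ_iff]

lemma tl_zero : tl S 0 = ⊤ := by
  rw [tl, ← range_eq_Icc]; exact S.hdiag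

lemma tl_empty : tl S (S.d + 1) = ⊥ := by
  rw [tl, Finset.Icc_eq_empty (by omega)]; simp

lemma hdl_top : hdl S S.d = ⊤ := S.hdiag

lemma hdl_zero : hdl S 0 = S.Veig 0 := by simp [hdl]

lemma U_le_flg (i : ℕ) : S.U i ≤ flg S i := inf_le_left

lemma Udown_le_flg (i : ℕ) : S.Udown i ≤ flg S i := inf_le_left

lemma U_zero : S.U 0 = S.Vstar 0 := by
  rw [U_eq, tl_zero, inf_top_eq, flg_zero]

lemma Udown_zero : S.Udown 0 = S.Vstar 0 := by
  rw [Udown_eq, Nat.sub_zero, hdl_top, inf_top_eq, flg_zero]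

lemma U_dsucc : S.U (S.d + 1) = ⊥ := by
  rw [U_eq, tl_empty, inf_bot_eq]

lemma A_act {j : ℕ} (hj : j ≤ S.d) {v : V} (hv : v ∈ S.Veig j) :
    S.A v = tha S j • v := by
  rw [S.hVeig j hj] at hv
  exact Module.End.mem_eigenspace_iff.1 hv

lemma Astar_act {j : ℕ} (hj : j ≤ S.d) {v : V} (hv : v ∈ S.Vstar j) :
    S.Astar v = thb S j • v := by
  rw [S.hVstar j hj] at hv
  exact Module.End.mem_eigenspace_iff.1 hv

lemma map_biSup_le {ι : Type*} (f : Module.End 𝕂 V) (s : Finset ι)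
    (p : ι → Submodule 𝕂 V) {Q : Submodule 𝕂 V}
    (h : ∀ j ∈ s, (p j).map f ≤ Q) : (⨆ j ∈ s, p j).map f ≤ Q := by
  rw [Submodule.map_iSup]
  exact iSup_le fun j => by
    rw [Submodule.map_iSup]; exact iSup_le fun hj => h j hj

lemma sub_smul_apply (f : Module.End 𝕂 V) (c : 𝕂) (v : V) :
    (f - c • 1) v = f v - c • v := by
  simp [LinearMap.sub_apply, LinearMap.smul_apply]

/-- `(A - c) (flg i) ⊆ flg (i+1)` for any scalar `c`. -/
lemma mapAsub_flg {i : ℕ} (hi : i ≤ S.d) (c : 𝕂) :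
    (flg S i).map (S.A - c • 1) ≤ flg S (i + 1) := by
  apply map_biSup_le
  intro j hj
  have hji : j ≤ i := Nat.lt_succ_iff.1 (Finset.mem_range.1 hj)
  rintro x ⟨v, hv, rfl⟩
  rw [sub_smul_apply]
  have h1 : S.A v ∈ flg S (i + 1) := by
    have h3 : S.Vstar (j - 1) ⊔ S.Vstar j ⊔ S.Vstar (j + 1) ≤ flg S (i + 1) :=
      sup_le (sup_le (Vstar_le_flg S (by omega)) (Vstar_le_flg S (by omega)))
        (Vstar_le_flg S (by omega))
    exact h3 (S.hTriStar j (hji.trans hi) ⟨v, hv, rfl⟩)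
  exact Submodule.sub_mem _ h1
    (Submodule.smul_mem _ _ (Vstar_le_flg S (by omega) hv))

/-- `(A - θ_i) (tl i) ⊆ tl (i+1)`. -/
lemma mapAsub_tl {i : ℕ} (hi : i ≤ S.d) :
    (tl S i).map (S.A - tha S i • 1) ≤ tl S (i + 1) := by
  apply map_biSup_le
  intro j hj
  obtain ⟨hij, hjd⟩ := Finset.mem_Icc.1 hj
  rintro x ⟨v, hv, rfl⟩
  rw [sub_smul_apply, A_act S hjd hv, ← sub_smul]
  rcases eq_or_lt_of_le hij with h | h
  · subst h; simp
  · exact Submodule.smul_mem _ _ (Veig_le_tl S (by omega) hjd hv)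

/-- `(A - θ_m) (hdl m) ⊆ hdl (m-1)`. -/
lemma mapAsub_hdl {m : ℕ} (hm : m ≤ S.d) :
    (hdl S m).map (S.A - tha S m • 1) ≤ hdl S (m - 1) := by
  apply map_biSup_le
  intro j hj
  have hjm : j ≤ m := Nat.lt_succ_iff.1 (Finset.mem_range.1 hj)
  rintro x ⟨v, hv, rfl⟩
  rw [sub_smul_apply, A_act S (hjm.trans hm) hv, ← sub_smul]
  rcases eq_or_lt_of_le hjm with h | h
  · subst h; simp
  · exact Submodule.smul_mem _ _ (Veig_le_hdl S (by omega) hv)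

/-- `(A* - θ*_i) (flg i) ⊆ flg (i-1)`. -/
lemma mapAstarsub_flg {i : ℕ} (hi : i ≤ S.d) :
    (flg S i).map (S.Astar - thb S i • 1) ≤ flg S (i - 1) := by
  apply map_biSup_le
  intro j hj
  have hji : j ≤ i := Nat.lt_succ_iff.1 (Finset.mem_range.1 hj)
  rintro x ⟨v, hv, rfl⟩
  rw [sub_smul_apply, Astar_act S (hji.trans hi) hv, ← sub_smul]
  rcases eq_or_lt_of_le hji with h | h
  · subst h; simp
  · exact Submodule.smul_mem _ _ (Vstar_le_flg S (by omega) hv)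

/-- `(A* - c) (tl i) ⊆ tl (i-1)` for any scalar `c`. -/
lemma mapAstarsub_tl (i : ℕ) (c : 𝕂) :
    (tl S i).map (S.Astar - c • 1) ≤ tl S (i - 1) := by
  apply map_biSup_le
  intro j hj
  obtain ⟨hij, hjd⟩ := Finset.mem_Icc.1 hj
  rintro x ⟨v, hv, rfl⟩
  rw [sub_smul_apply]
  have h1 : S.Astar v ∈ tl S (i - 1) := by
    have h3 : S.Veig (j - 1) ⊔ S.Veig j ⊔ S.Veig (j + 1) ≤ tl S (i - 1) := by
      refine sup_le (sup_le (Veig_le_tl S (by omega) (by omega))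
        (Veig_le_tl S (by omega) hjd)) ?_
      rcases Nat.lt_or_ge j S.d with h | h
      · exact Veig_le_tl S (by omega) (by omega)
      · rw [S.hVeig_zero (j + 1) (by omega)]; exact bot_le
    exact h3 (S.hTri j hjd ⟨v, hv, rfl⟩)
  exact Submodule.sub_mem _ h1
    (Submodule.smul_mem _ _ (Veig_le_tl S (by omega) hjd hv))

/-- `(A* - c) (hdl m) ⊆ hdl (m+1)` for any scalar `c`, `m ≤ d`. -/
lemma mapAstarsub_hdl {m : ℕ} (hm : m ≤ S.d) (c : 𝕂) :
    (hdl S m).map (S.Astar - c • 1) ≤ hdl S (m + 1) := by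
  apply map_biSup_le
  intro j hj
  have hjm : j ≤ m := Nat.lt_succ_iff.1 (Finset.mem_range.1 hj)
  rintro x ⟨v, hv, rfl⟩
  rw [sub_smul_apply]
  have h1 : S.Astar v ∈ hdl S (m + 1) := by
    have h3 : S.Veig (j - 1) ⊔ S.Veig j ⊔ S.Veig (j + 1) ≤ hdl S (m + 1) :=
      sup_le (sup_le (Veig_le_hdl S (by omega)) (Veig_le_hdl S (by omega)))
        (Veig_le_hdl S (by omega))
    exact h3 (S.hTri j (hjm.trans hm) ⟨v, hv, rfl⟩)
  exact Submodule.sub_mem _ h1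
    (Submodule.smul_mem _ _ (Veig_le_hdl S (by omega) hv))

lemma decomp_apply (f : Module.End 𝕂 V) (c : 𝕂) (v : V) :
    f v = c • v + (f - c • 1) v := by
  rw [sub_smul_apply]; abel

/-- `A U_i ⊆ U_i ⊔ U_{i+1}`. -/
lemma mapA_U {i : ℕ} (hi : i ≤ S.d) :
    (S.U i).map S.A ≤ S.U i ⊔ S.U (i + 1) := by
  rintro x ⟨v, hv, rfl⟩
  rw [decomp_apply S.A (tha S i) v]
  refine Submodule.add_mem _ (Submodule.mem_sup_left (Submodule.smul_mem _ _ hv))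
    (Submodule.mem_sup_right ?_)
  rw [U_eq] at hv ⊢
  exact ⟨mapAsub_flg S hi _ ⟨v, hv.1, rfl⟩, mapAsub_tl S hi ⟨v, hv.2, rfl⟩⟩

/-- `A* U_i ⊆ U_{i-1} ⊔ U_i`. -/
lemma mapAstar_U {i : ℕ} (hi : i ≤ S.d) :
    (S.U i).map S.Astar ≤ S.U (i - 1) ⊔ S.U i := by
  rintro x ⟨v, hv, rfl⟩
  rw [decomp_apply S.Astar (thb S i) v]
  refine Submodule.add_mem _ (Submodule.mem_sup_right (Submodule.smul_mem _ _ hv))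
    (Submodule.mem_sup_left ?_)
  rw [U_eq] at hv ⊢
  exact ⟨mapAstarsub_flg S hi ⟨v, hv.1, rfl⟩, mapAstarsub_tl S i _ ⟨v, hv.2, rfl⟩⟩

/-- `A Udown_i ⊆ Udown_i ⊔ Udown_{i+1}`. -/
lemma mapA_Udown {i : ℕ} (hi : i ≤ S.d) :
    (S.Udown i).map S.A ≤ S.Udown i ⊔ S.Udown (i + 1) := by
  rintro x ⟨v, hv, rfl⟩
  rcases eq_or_lt_of_le hi with h | h
  · -- i = d : Udown d ⊆ Veig 0, and A acts as θ_0 there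
    subst h
    rw [Udown_eq, Nat.sub_self, hdl_zero] at hv
    have hA : S.A v = tha S 0 • v := A_act S (by omega) hv.2
    rw [hA]
    refine Submodule.mem_sup_left ?_
    rw [Udown_eq, Nat.sub_self, hdl_zero]
    exact Submodule.smul_mem _ _ hv
  · rw [decomp_apply S.A (tha S (S.d - i)) v]
    refine Submodule.add_mem _ (Submodule.mem_sup_left (Submodule.smul_mem _ _ hv))
      (Submodule.mem_sup_right ?_)
    rw [Udown_eq] at hv ⊢
    have h2 : S.d - (i + 1) = S.d - i - 1 := by omega
    rw [h2]
    exact ⟨mapAsub_flg S hi _ ⟨v, hv.1, rfl⟩,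
      mapAsub_hdl S (by omega) ⟨v, hv.2, rfl⟩⟩

/-- `A* Udown_i ⊆ Udown_{i-1} ⊔ Udown_i`. -/
lemma mapAstar_Udown {i : ℕ} (hi : i ≤ S.d) :
    (S.Udown i).map S.Astar ≤ S.Udown (i - 1) ⊔ S.Udown i := by
  rintro x ⟨v, hv, rfl⟩
  rcases Nat.eq_zero_or_pos i with h | h
  · subst h
    rw [Udown_zero] at hv
    have hA : S.Astar v = thb S 0 • v := Astar_act S (by omega) hv
    rw [hA]
    refine Submodule.mem_sup_right ?_
    rw [Udown_zero]
    exact Submodule.smul_mem _ _ hv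
  · rw [decomp_apply S.Astar (thb S i) v]
    refine Submodule.add_mem _ (Submodule.mem_sup_right (Submodule.smul_mem _ _ hv))
      (Submodule.mem_sup_left ?_)
    rw [Udown_eq] at hv ⊢
    have h2 : S.d - (i - 1) = (S.d - i) + 1 := by omega
    rw [h2]
    exact ⟨mapAstarsub_flg S hi ⟨v, hv.1, rfl⟩,
      mapAstarsub_hdl S (by omega) _ ⟨v, hv.2, rfl⟩⟩

lemma U_le_sumU {j : ℕ} (hj : j ≤ S.d) :
    S.U j ≤ ⨆ i ∈ Finset.range (S.d + 1), S.U i :=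
  le_iSup₂ (f := fun i (_ : i ∈ Finset.range (S.d + 1)) => S.U i) j
    (Finset.mem_range.2 (by omega))

lemma Udown_le_sumUdown {j : ℕ} (hj : j ≤ S.d) :
    S.Udown j ≤ ⨆ i ∈ Finset.range (S.d + 1), S.Udown i :=
  le_iSup₂ (f := fun i (_ : i ∈ Finset.range (S.d + 1)) => S.Udown i) j
    (Finset.mem_range.2 (by omega))

/-- The first split decomposition fills up `V`. -/
lemma sumU_top : (⨆ i ∈ Finset.range (S.d + 1), S.U i) = ⊤ := by
  have hA : (⨆ i ∈ Finset.range (S.d + 1), S.U i).map S.A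
      ≤ ⨆ i ∈ Finset.range (S.d + 1), S.U i := by
    apply map_biSup_le
    intro j hj
    have hjd : j ≤ S.d := Nat.lt_succ_iff.1 (Finset.mem_range.1 hj)
    refine (mapA_U S hjd).trans (sup_le (U_le_sumU S hjd) ?_)
    rcases Nat.lt_or_ge j S.d with h | h
    · exact U_le_sumU S (by omega)
    · have : j = S.d := by omega
      subst this
      rw [U_dsucc]; exact bot_le
  have hAs : (⨆ i ∈ Finset.range (S.d + 1), S.U i).map S.Astar
      ≤ ⨆ i ∈ Finset.range (S.d + 1), S.U i := by
    apply map_biSup_le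
    intro j hj
    have hjd : j ≤ S.d := Nat.lt_succ_iff.1 (Finset.mem_range.1 hj)
    exact (mapAstar_U S hjd).trans (sup_le (U_le_sumU S (by omega)) (U_le_sumU S hjd))
  rcases S.hIrred _ hA hAs with h | h
  · exfalso
    apply S.hVstar_ne 0 (by omega)
    have h0 : S.U 0 ≤ ⊥ := h ▸ U_le_sumU S (by omega)
    rw [U_zero] at h0
    exact le_bot_iff.1 h0
  · exact h

/-- The second split decomposition fills up `V`. -/
lemma sumUdown_top : (⨆ i ∈ Finset.range (S.d + 1), S.Udown i) = ⊤ := by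
  have hA : (⨆ i ∈ Finset.range (S.d + 1), S.Udown i).map S.A
      ≤ ⨆ i ∈ Finset.range (S.d + 1), S.Udown i := by
    apply map_biSup_le
    intro j hj
    have hjd : j ≤ S.d := Nat.lt_succ_iff.1 (Finset.mem_range.1 hj)
    refine (mapA_Udown S hjd).trans (sup_le (Udown_le_sumUdown S hjd) ?_)
    rcases Nat.lt_or_ge j S.d with h | h
    · exact Udown_le_sumUdown S (by omega)
    · have : j = S.d := by omega
      subst this
      refine le_trans ?_ (Udown_le_sumUdown S (le_refl S.d))
      rw [Udown_eq, Udown_eq]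
      refine inf_le_inf ?_ (le_of_eq (by congr 1; omega))
      rw [flg_top]
      exact le_top
  have hAs : (⨆ i ∈ Finset.range (S.d + 1), S.Udown i).map S.Astar
      ≤ ⨆ i ∈ Finset.range (S.d + 1), S.Udown i := by
    apply map_biSup_le
    intro j hj
    have hjd : j ≤ S.d := Nat.lt_succ_iff.1 (Finset.mem_range.1 hj)
    exact (mapAstar_Udown S hjd).trans
      (sup_le (Udown_le_sumUdown S (by omega)) (Udown_le_sumUdown S hjd))
  rcases S.hIrred _ hA hAs with h | h
  · exfalso
    apply S.hVstar_ne 0 (by omega)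
    have h0 : S.Udown 0 ≤ ⊥ := h ▸ Udown_le_sumUdown S (by omega)
    rw [Udown_zero] at h0
    exact le_bot_iff.1 h0
  · exact h

lemma csc_ne (i : ℕ) : csc S i ≠ 0 := zpow_ne_zero _ S.hq

lemma csc_succ (i : ℕ) : csc S i = csc S (i + 1) * S.q ^ (2 : ℤ) := by
  rw [csc, csc, ← zpow_add₀ S.hq]
  congr 1
  push_cast
  ring

lemma csc_injOn {i j : ℕ} (h : csc S i = csc S j) (hij : i ≠ j) (hij2 : j = i + 1) :
    False := by
  subst hij2
  rw [csc_succ S i] at h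
  have hq2 : S.q ^ (2 : ℤ) = 1 := by
    refine mul_left_cancel₀ (csc_ne S (i + 1)) ?_
    rw [mul_one]
    exact h
  apply S.hq4
  have : S.q ^ (2 : ℤ) = S.q ^ (2 : ℕ) := by norm_cast
  rw [this] at hq2
  calc S.q ^ 4 = (S.q ^ 2) ^ 2 := by ring
  _ = 1 := by rw [hq2]; norm_num

lemma K_act {i : ℕ} (hi : i ≤ S.d) {v : V} (hv : v ∈ S.U i) :
    S.K v = csc S i • v := S.hK i hi v hv

lemma B_act {i : ℕ} (hi : i ≤ S.d) {v : V} (hv : v ∈ S.Udown i) :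
    S.B v = csc S i • v := S.hB i hi v hv

lemma Kinv_act {i : ℕ} (hi : i ≤ S.d) {v : V} (hv : v ∈ S.U i) :
    S.Kinv v = (csc S i)⁻¹ • v := by
  have h1 : S.Kinv (S.K v) = v := by
    have := congrFun (congrArg DFunLike.coe S.hKinvK) v
    simpa [Module.End.mul_apply] using this
  rw [K_act S hi hv, map_smul] at h1
  calc S.Kinv v = (csc S i)⁻¹ • (csc S i • S.Kinv v) := by
        rw [smul_smul, inv_mul_cancel₀ (csc_ne S i), one_smul]
    _ = (csc S i)⁻¹ • v := by rw [h1]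

lemma Binv_act {i : ℕ} (hi : i ≤ S.d) {v : V} (hv : v ∈ S.Udown i) :
    S.Binv v = (csc S i)⁻¹ • v := by
  have h1 : S.Binv (S.B v) = v := by
    have := congrFun (congrArg DFunLike.coe S.hBinvB) v
    simpa [Module.End.mul_apply] using this
  rw [B_act S hi hv, map_smul] at h1
  calc S.Binv v = (csc S i)⁻¹ • (csc S i • S.Binv v) := by
        rw [smul_smul, inv_mul_cancel₀ (csc_ne S i), one_smul]
    _ = (csc S i)⁻¹ • v := by rw [h1]

/-- key nondegeneracy: `flg i ⊓ tl (i+1) = ⊥`, from the two `K`-eigenvalues. -/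
lemma flg_inf_tl {i : ℕ} (hi : i + 1 ≤ S.d) : flg S i ⊓ tl S (i + 1) = ⊥ := by
  rw [eq_bot_iff]
  rintro v ⟨hv1, hv2⟩
  have hU1 : v ∈ S.U i := ⟨hv1, tl_anti S (by omega) hv2⟩
  have hU2 : v ∈ S.U (i + 1) := ⟨flg_mono S (by omega) hv1, hv2⟩
  have h1 := K_act S (by omega) hU1
  have h2 := K_act S hi hU2
  have h3 : (csc S i - csc S (i + 1)) • v = 0 := by
    rw [sub_smul, ← h1, ← h2, sub_self]
  rcases smul_eq_zero.1 h3 with h | h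
  · exact absurd (sub_eq_zero.mp h) (fun hc => csc_injOn S hc (by omega) rfl)
  · exact h

/-- key nondegeneracy: `flg i ⊓ hdl (d-i-1) = ⊥`, from the two `B`-eigenvalues. -/
lemma flg_inf_hdl {i : ℕ} (hi : i + 1 ≤ S.d) :
    flg S i ⊓ hdl S (S.d - i - 1) = ⊥ := by
  rw [eq_bot_iff]
  rintro v ⟨hv1, hv2⟩
  have hU1 : v ∈ S.Udown i := ⟨hv1, hdl_mono S (by omega) hv2⟩
  have hU2 : v ∈ S.Udown (i + 1) := by
    refine ⟨flg_mono S (by omega) hv1, ?_⟩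
    have : S.d - (i + 1) = S.d - i - 1 := by omega
    rw [this]; exact hv2
  have h1 := B_act S (by omega) hU1
  have h2 := B_act S hi hU2
  have h3 : (csc S i - csc S (i + 1)) • v = 0 := by
    rw [sub_smul, ← h1, ← h2, sub_self]
  rcases smul_eq_zero.1 h3 with h | h
  · exact absurd (sub_eq_zero.mp h) (fun hc => csc_injOn S hc (by omega) rfl)
  · exact h

/-- `flg i = U_0 + ⋯ + U_i`. -/
lemma flagU {i : ℕ} (hi : i ≤ S.d) :
    flg S i = ⨆ j ∈ Finset.range (i + 1), S.U j := by
  refine le_antisymm ?_ (iSup₂_le fun j hj =>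
    (U_le_flg S j).trans (flg_mono S (Nat.lt_succ_iff.1 (Finset.mem_range.1 hj))))
  rcases eq_or_lt_of_le hi with h | h
  · subst h
    rw [flg_top]
    exact le_of_eq (sumU_top S).symm
  · set G := ⨆ j ∈ Finset.range (i + 1), S.U j with hG
    set T := ⨆ j ∈ Finset.Icc (i + 1) S.d, S.U j with hT
    have hGle : G ≤ flg S i := iSup₂_le fun j hj =>
      (U_le_flg S j).trans (flg_mono S (Nat.lt_succ_iff.1 (Finset.mem_range.1 hj)))
    have hGT : G ⊔ T = ⊤ := by
      rw [eq_top_iff, ← sumU_top S]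
      refine iSup₂_le fun j hj => ?_
      have hjd : j ≤ S.d := Nat.lt_succ_iff.1 (Finset.mem_range.1 hj)
      rcases Nat.lt_or_ge j (i + 1) with hj2 | hj2
      · exact le_sup_of_le_left
          (le_iSup₂ (f := fun j (_ : j ∈ Finset.range (i + 1)) => S.U j) j
            (Finset.mem_range.2 hj2))
      · exact le_sup_of_le_right
          (le_iSup₂ (f := fun j (_ : j ∈ Finset.Icc (i + 1) S.d) => S.U j) j
            (Finset.mem_Icc.2 ⟨hj2, hjd⟩))
    have hTle : T ⊓ flg S i ≤ ⊥ := by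
      have h1 : T ≤ tl S (i + 1) := iSup₂_le fun j hj => by
        obtain ⟨h2, h3⟩ := Finset.mem_Icc.1 hj
        exact le_trans (inf_le_right : S.U j ≤ tl S j) (tl_anti S h2)
      calc T ⊓ flg S i ≤ tl S (i + 1) ⊓ flg S i := inf_le_inf_right _ h1
        _ = flg S i ⊓ tl S (i + 1) := inf_comm _ _
        _ = ⊥ := flg_inf_tl S (by omega)
    calc flg S i = (G ⊔ T) ⊓ flg S i := by rw [hGT, top_inf_eq]
      _ = G ⊔ T ⊓ flg S i := sup_inf_assoc_of_le _ hGle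
      _ ≤ G ⊔ ⊥ := sup_le_sup_left hTle G
      _ = G := sup_bot_eq G

/-- `flg i = Udown_0 + ⋯ + Udown_i`. -/
lemma flagUdown {i : ℕ} (hi : i ≤ S.d) :
    flg S i = ⨆ j ∈ Finset.range (i + 1), S.Udown j := by
  refine le_antisymm ?_ (iSup₂_le fun j hj =>
    (Udown_le_flg S j).trans (flg_mono S (Nat.lt_succ_iff.1 (Finset.mem_range.1 hj))))
  rcases eq_or_lt_of_le hi with h | h
  · subst h
    rw [flg_top]
    exact le_of_eq (sumUdown_top S).symm
  · set G := ⨆ j ∈ Finset.range (i + 1), S.Udown j with hG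
    set T := ⨆ j ∈ Finset.Icc (i + 1) S.d, S.Udown j with hT
    have hGle : G ≤ flg S i := iSup₂_le fun j hj =>
      (Udown_le_flg S j).trans (flg_mono S (Nat.lt_succ_iff.1 (Finset.mem_range.1 hj)))
    have hGT : G ⊔ T = ⊤ := by
      rw [eq_top_iff, ← sumUdown_top S]
      refine iSup₂_le fun j hj => ?_
      have hjd : j ≤ S.d := Nat.lt_succ_iff.1 (Finset.mem_range.1 hj)
      rcases Nat.lt_or_ge j (i + 1) with hj2 | hj2
      · exact le_sup_of_le_left
          (le_iSup₂ (f := fun j (_ : j ∈ Finset.range (i + 1)) => S.Udown j) j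
            (Finset.mem_range.2 hj2))
      · exact le_sup_of_le_right
          (le_iSup₂ (f := fun j (_ : j ∈ Finset.Icc (i + 1) S.d) => S.Udown j) j
            (Finset.mem_Icc.2 ⟨hj2, hjd⟩))
    have hTle : T ⊓ flg S i ≤ ⊥ := by
      have h1 : T ≤ hdl S (S.d - i - 1) := iSup₂_le fun j hj => by
        obtain ⟨h2, h3⟩ := Finset.mem_Icc.1 hj
        exact le_trans (inf_le_right : S.Udown j ≤ hdl S (S.d - j))
          (hdl_mono S (by omega))
      calc T ⊓ flg S i ≤ hdl S (S.d - i - 1) ⊓ flg S i := inf_le_inf_right _ h1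
        _ = flg S i ⊓ hdl S (S.d - i - 1) := inf_comm _ _
        _ = ⊥ := flg_inf_hdl S (by omega)
    calc flg S i = (G ⊔ T) ⊓ flg S i := by rw [hGT, top_inf_eq]
      _ = G ⊔ T ⊓ flg S i := sup_inf_assoc_of_le _ hGle
      _ ≤ G ⊔ ⊥ := sup_le_sup_left hTle G
      _ = G := sup_bot_eq G

/-- Generic lemma: if `X` acts on `P j` by `e j` and `Y` acts on `Q k` by `f k`,
with `e j * f j = 1`, and both `P`, `Q` refine the flag `flg`, then
`1 - Y * X` lowers the flag, and kills `U_j` down one step. -/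
lemma gen_flg_map (X Y : Module.End 𝕂 V) (P Q : ℕ → Submodule 𝕂 V) (e f : ℕ → 𝕂)
    (hX : ∀ j ≤ S.d, ∀ v ∈ P j, X v = e j • v)
    (hY : ∀ k ≤ S.d, ∀ w ∈ Q k, Y w = f k • w)
    (hef : ∀ j ≤ S.d, e j * f j = 1)
    (hPsum : ∀ i ≤ S.d, flg S i = ⨆ j ∈ Finset.range (i + 1), P j)
    (hQsum : ∀ i ≤ S.d, flg S i = ⨆ k ∈ Finset.range (i + 1), Q k) :
    ∀ i ≤ S.d, (flg S i).map (1 - Y * X) ≤ flgP S i := by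
  have hQle : ∀ k ≤ S.d, Q k ≤ flg S k := fun k hk =>
    (hQsum k hk).symm ▸ le_iSup₂ (f := fun j (_ : j ∈ Finset.range (k + 1)) => Q j) k
      (Finset.mem_range.2 (by omega))
  -- step 1: (1 - Y X) P j ⊆ flgP j
  have key1 : ∀ j ≤ S.d, (P j).map (1 - Y * X) ≤ flgP S j := by
    intro j hj
    rintro x ⟨v, hv, rfl⟩
    have hxv : (1 - Y * X) v = v - e j • Y v := by
      simp [LinearMap.sub_apply, Module.End.mul_apply, hX j hj v hv, map_smul]
    rw [hxv]
    -- v ∈ flg j = ⨆ Q k, and (1 - e j • Y) maps each Q k into flgP j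
    have hvflg : v ∈ (⨆ k ∈ Finset.range (j + 1), Q k) := by
      rw [← hQsum j hj]
      exact ((hPsum j hj) ▸ le_iSup₂
        (f := fun i (_ : i ∈ Finset.range (j + 1)) => P i) j
        (Finset.mem_range.2 (by omega)) : P j ≤ flg S j) hv
    have hφ : ((⨆ k ∈ Finset.range (j + 1), Q k).map
        ((1 : Module.End 𝕂 V) - e j • Y)) ≤ flgP S j := by
      apply map_biSup_le
      intro k hk
      have hkj : k ≤ j := Nat.lt_succ_iff.1 (Finset.mem_range.1 hk)
      rintro y ⟨w, hw, rfl⟩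
      have hyw : ((1 : Module.End 𝕂 V) - e j • Y) w = (1 - e j * f k) • w := by
        simp [LinearMap.sub_apply, LinearMap.smul_apply,
          hY k (hkj.trans hj) w hw, smul_smul, sub_smul]
      rw [hyw]
      rcases eq_or_lt_of_le hkj with h | h
      · subst h
        rw [hef k (hkj.trans hj), sub_self, zero_smul]
        exact Submodule.zero_mem _
      · refine Submodule.smul_mem _ _ ?_
        have : Q k ≤ flgP S j := (hQle k (by omega)).trans (by
          rw [← flgP_succ]
          exact flgP_mono S (by omega))
        exact this hw
    have : ((1 : Module.End 𝕂 V) - e j • Y) v = v - e j • Y v := by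
      simp [LinearMap.sub_apply, LinearMap.smul_apply]
    rw [← this]
    exact hφ ⟨v, hvflg, rfl⟩
  -- step 2
  intro i hi
  rw [hPsum i hi]
  apply map_biSup_le
  intro j hj
  have hji : j ≤ i := Nat.lt_succ_iff.1 (Finset.mem_range.1 hj)
  exact (key1 j (hji.trans hi)).trans (flgP_mono S hji)

/-- From the flag-lowering property, nilpotency. -/
lemma gen_nilpotent (T : Module.End 𝕂 V)
    (hT : ∀ i ≤ S.d, (flg S i).map T ≤ flgP S i) :
    IsNilpotent T := by
  have key : ∀ k, k ≤ S.d → (flg S k).map (T ^ (k + 1)) ≤ ⊥ := by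
    intro k
    induction k with
    | zero =>
      intro hk
      rw [pow_one]
      exact (hT 0 hk).trans (le_of_eq (flgP_zero S))
    | succ n ih =>
      intro hk
      have h1 : T ^ (n + 2) = (T ^ (n + 1)).comp T := by
        rw [pow_succ, Module.End.mul_eq_comp]
      rw [h1, Submodule.map_comp]
      refine le_trans (Submodule.map_mono ((hT (n + 1) hk).trans
        (le_of_eq (flgP_succ S n)))) (ih (by omega))
  refine ⟨S.d + 1, ?_⟩
  ext v
  have hv : v ∈ flg S S.d := by rw [flg_top]; trivial
  have := key S.d le_rfl ⟨v, hv, rfl⟩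
  simpa using this

/-- Combined: the map statement on `U_i` plus nilpotency, for `T = 1 - Y*X`. -/
lemma gen_statement (X Y : Module.End 𝕂 V) (P Q : ℕ → Submodule 𝕂 V) (e f : ℕ → 𝕂)
    (hX : ∀ j ≤ S.d, ∀ v ∈ P j, X v = e j • v)
    (hY : ∀ k ≤ S.d, ∀ w ∈ Q k, Y w = f k • w)
    (hef : ∀ j ≤ S.d, e j * f j = 1)
    (hPsum : ∀ i ≤ S.d, flg S i = ⨆ j ∈ Finset.range (i + 1), P j)
    (hQsum : ∀ i ≤ S.d, flg S i = ⨆ k ∈ Finset.range (i + 1), Q k) :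
    (∀ i ≤ S.d, (S.U i).map (1 - Y * X) ≤ ⨆ j ∈ Finset.range i, S.U j) ∧
      IsNilpotent ((1 : Module.End 𝕂 V) - Y * X) := by
  have hmain := gen_flg_map S X Y P Q e f hX hY hef hPsum hQsum
  constructor
  · intro i hi
    have h1 : (S.U i).map (1 - Y * X) ≤ flgP S i :=
      (Submodule.map_mono (U_le_flg S i)).trans (hmain i hi)
    refine h1.trans ?_
    cases i with
    | zero => rw [flgP_zero]; exact bot_le
    | succ n =>
      rw [flgP_succ, flagU S (by omega : n ≤ S.d)]
  · exact gen_nilpotent S _ hmain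

end QRacahAux

/-- each of `I - BK⁻¹`, `I - KB⁻¹`, `I - K⁻¹B`, `I - B⁻¹K` sends `U_i` into
`U_0 + U_1 + ⋯ + U_{i-1}` for `0 ≤ i ≤ d`, and each is nilpotent. -/
theorem statement9 (S : QRacahOps 𝕂 V) :
    ((∀ i ≤ S.d, (S.U i).map (1 - S.B * S.Kinv) ≤ ⨆ j ∈ Finset.range i, S.U j) ∧
      IsNilpotent ((1 : Module.End 𝕂 V) - S.B * S.Kinv)) ∧
    ((∀ i ≤ S.d, (S.U i).map (1 - S.K * S.Binv) ≤ ⨆ j ∈ Finset.range i, S.U j) ∧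
      IsNilpotent ((1 : Module.End 𝕂 V) - S.K * S.Binv)) ∧
    ((∀ i ≤ S.d, (S.U i).map (1 - S.Kinv * S.B) ≤ ⨆ j ∈ Finset.range i, S.U j) ∧
      IsNilpotent ((1 : Module.End 𝕂 V) - S.Kinv * S.B)) ∧
    ((∀ i ≤ S.d, (S.U i).map (1 - S.Binv * S.K) ≤ ⨆ j ∈ Finset.range i, S.U j) ∧
      IsNilpotent ((1 : Module.End 𝕂 V) - S.Binv * S.K)) := by
  have hK : ∀ j ≤ S.d, ∀ v ∈ S.U j, S.K v = QRacahAux.csc S j • v :=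
    fun j hj v hv => QRacahAux.K_act S hj hv
  have hB : ∀ j ≤ S.d, ∀ v ∈ S.Udown j, S.B v = QRacahAux.csc S j • v :=
    fun j hj v hv => QRacahAux.B_act S hj hv
  have hKinv : ∀ j ≤ S.d, ∀ v ∈ S.U j, S.Kinv v = (QRacahAux.csc S j)⁻¹ • v :=
    fun j hj v hv => QRacahAux.Kinv_act S hj hv
  have hBinv : ∀ j ≤ S.d, ∀ v ∈ S.Udown j, S.Binv v = (QRacahAux.csc S j)⁻¹ • v :=
    fun j hj v hv => QRacahAux.Binv_act S hj hv
  have hU : ∀ i ≤ S.d, QRacahAux.flg S i = ⨆ j ∈ Finset.range (i + 1), S.U j :=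
    fun i hi => QRacahAux.flagU S hi
  have hUd : ∀ i ≤ S.d, QRacahAux.flg S i = ⨆ j ∈ Finset.range (i + 1), S.Udown j :=
    fun i hi => QRacahAux.flagUdown S hi
  have he1 : ∀ j ≤ S.d, (QRacahAux.csc S j)⁻¹ * QRacahAux.csc S j = 1 :=
    fun j _ => inv_mul_cancel₀ (QRacahAux.csc_ne S j)
  have he2 : ∀ j ≤ S.d, QRacahAux.csc S j * (QRacahAux.csc S j)⁻¹ = 1 :=
    fun j _ => mul_inv_cancel₀ (QRacahAux.csc_ne S j)
  exact ⟨QRacahAux.gen_statement S S.Kinv S.B S.U S.Udown _ _ hKinv hB he1 hU hUd,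
    QRacahAux.gen_statement S S.Binv S.K S.Udown S.U _ _ hBinv hK he1 hUd hU,
    QRacahAux.gen_statement S S.B S.Kinv S.Udown S.U _ _ hB hKinv he2 hUd hU,
    QRacahAux.gen_statement S S.K S.Binv S.U S.Udown _ _ hK hBinv he2 hU hUd⟩

end Statements
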